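/- Let (ΛV, d) be a pure Sullivan algebra over a field K of characteristic zero, with even generators x₀,…,x_p and odd generators y₀,…,y_q, such that dy₀ = x₀ − a for some a ∈ Λ(x₁,…,x_p). Define η : Λ(x₀,…,x_p) → Λ(x₁,…,x_p) by η(x₀) = a, η(x_i) = x_i for i ≥ 1, and define the pure Sullivan algebra (ΛW, d̄) on generators x₁,…,x_p, y₁,…,y_q with d̄x_i = 0 and d̄y_j = η(dy_j), and the algebra (Λ(x₀,y₀), d̄) with d̄x₀ = 0, d̄y₀ = x₀. Then there is an isomorphism of differential graded algebras (ΛV, d) ≅ (ΛW, d̄) ⊗ (Λ(x₀,y₀), d̄). -/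

import Mathlib

open scoped TensorProduct

/-- The free graded-commutative algebra on even generators `x_i` (`i : ι`) and
odd generators `y_j` (`j : κ`), modelled as `K[x_i] ⊗ Λ(y_j)`. -/
abbrev FreeGC (K : Type) [Field K] (ι κ : Type) : Type :=
  MvPolynomial ι K ⊗[K] ExteriorAlgebra K (κ →₀ K)

/-- The even generator `x_i`. -/
noncomputable def genEv (K : Type) [Field K] (ι κ : Type) (i : ι) : FreeGC K ι κ :=
  MvPolynomial.X i ⊗ₜ[K] 1

/-- The odd generator `y_j`. -/
noncomputable def genOd (K : Type) [Field K] (ι κ : Type) (j : κ) : FreeGC K ι κ :=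
  1 ⊗ₜ[K] ExteriorAlgebra.ι K (Finsupp.single j 1)

namespace Stmt11Aux

open MvPolynomial

variable {K : Type} [Field K] {p q : ℕ}

local notation "A" => MvPolynomial (Fin (p+1)) K
local notation "E" => ExteriorAlgebra K (Fin (q+1) →₀ K)
local notation "T" => FreeGC K (Fin (p+1)) (Fin (q+1))

/-- division lemma -/
theorem div_lemma (a : MvPolynomial (Fin p) K) (Q : A) :
    ∃ c : A, Q - rename Fin.succ (aeval (Fin.cases a fun i => X i) Q)
      = (X 0 - rename Fin.succ a) * c := by
  induction Q using MvPolynomial.induction_on with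
  | C r => exact ⟨0, by simp⟩
  | add Q1 Q2 h1 h2 =>
    obtain ⟨c1, e1⟩ := h1; obtain ⟨c2, e2⟩ := h2
    exact ⟨c1 + c2, by rw [map_add, map_add]; ring_nf; linear_combination e1 + e2⟩
  | mul_X Q i h =>
    obtain ⟨c, e⟩ := h
    induction i using Fin.cases with
    | zero =>
      refine ⟨c * X 0 + rename Fin.succ (aeval (Fin.cases a fun i => X i) Q), ?_⟩
      simp only [map_mul, aeval_X, Fin.cases_zero]
      linear_combination (X 0 : A) * e
    | succ i =>
      refine ⟨c * X i.succ, ?_⟩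
      simp only [map_mul, aeval_X, Fin.cases_succ, rename_X]
      linear_combination (X i.succ : A) * e

theorem adjoin_eq_top :
    Algebra.adjoin K (Set.range (genEv K (Fin (p+1)) (Fin (q+1))) ∪
      Set.range (genOd K (Fin (p+1)) (Fin (q+1)))) = ⊤ := by
  rw [eq_top_iff]
  rintro x -
  set S := Algebra.adjoin K (Set.range (genEv K (Fin (p+1)) (Fin (q+1))) ∪
      Set.range (genOd K (Fin (p+1)) (Fin (q+1))))
  have hx : ∀ P : A, (P ⊗ₜ[K] (1 : E)) ∈ S := by
    intro P
    induction P using MvPolynomial.induction_on with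
    | C r =>
      have : (C r : A) ⊗ₜ[K] (1 : E) = algebraMap K T r := by
        rw [Algebra.TensorProduct.algebraMap_apply, MvPolynomial.algebraMap_eq]
      rw [this]; exact S.algebraMap_mem r
    | add Q1 Q2 h1 h2 =>
      rw [TensorProduct.add_tmul]; exact S.add_mem h1 h2
    | mul_X Q i h =>
      have : (Q * X i) ⊗ₜ[K] (1 : E) = (Q ⊗ₜ[K] (1 : E)) * genEv K _ _ i := by
        simp [genEv, Algebra.TensorProduct.tmul_mul_tmul]
      rw [this]
      exact S.mul_mem h (Algebra.subset_adjoin (Or.inl ⟨i, rfl⟩))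
  have hy : ∀ e : E, ((1 : A) ⊗ₜ[K] e) ∈ S := by
    intro e
    induction e using ExteriorAlgebra.induction with
    | algebraMap r =>
      have h := (Algebra.TensorProduct.includeRight :
          ExteriorAlgebra K (Fin (q+1) →₀ K) →ₐ[K] T).commutes r
      rw [Algebra.TensorProduct.includeRight_apply] at h
      rw [h]; exact S.algebraMap_mem r
    | ι m =>
      induction m using Finsupp.induction with
      | zero => rw [map_zero, TensorProduct.tmul_zero]; exact S.zero_mem
      | single_add j r m hjm hr ih =>
        rw [map_add, TensorProduct.tmul_add]
        refine S.add_mem ?_ ih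
        have : Finsupp.single j r = r • Finsupp.single j 1 := by
          rw [Finsupp.smul_single, smul_eq_mul, mul_one]
        rw [this, map_smul, TensorProduct.tmul_smul]
        exact S.smul_mem (Algebra.subset_adjoin (Or.inr ⟨j, rfl⟩)) r
    | mul x y hx' hy' =>
      have : (1 : A) ⊗ₜ[K] (x * y) = ((1:A) ⊗ₜ[K] x) * ((1:A) ⊗ₜ[K] y) := by
        rw [Algebra.TensorProduct.tmul_mul_tmul, one_mul]
      rw [this]; exact S.mul_mem hx' hy'
    | add x y hx' hy' =>
      rw [TensorProduct.tmul_add]; exact S.add_mem hx' hy'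
  induction x using TensorProduct.induction_on with
  | zero => exact S.zero_mem
  | tmul P e =>
    have : P ⊗ₜ[K] e = (P ⊗ₜ[K] (1:E)) * ((1:A) ⊗ₜ[K] e) := by
      rw [Algebra.TensorProduct.tmul_mul_tmul, mul_one, one_mul]
    rw [this]; exact S.mul_mem (hx P) (hy e)
  | add x y h1 h2 => exact S.add_mem h1 h2

/-- custom induction -/
theorem gen_induction {M : T → Prop}
    (halg : ∀ r : K, M (algebraMap K T r))
    (hx : ∀ i, M (genEv K (Fin (p+1)) (Fin (q+1)) i))
    (hy : ∀ j, M (genOd K (Fin (p+1)) (Fin (q+1)) j))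
    (hadd : ∀ a b, M a → M b → M (a + b))
    (hmul : ∀ a b, M a → M b → M (a * b)) :
    ∀ x, M x := by
  intro x
  have hx' : x ∈ Algebra.adjoin K (Set.range (genEv K (Fin (p+1)) (Fin (q+1))) ∪
      Set.range (genOd K (Fin (p+1)) (Fin (q+1)))) := by
    rw [adjoin_eq_top]; trivial
  refine Algebra.adjoin_induction ?_ ?_ ?_ ?_ hx'
  · rintro y (⟨i, rfl⟩ | ⟨j, rfl⟩)
    · exact hx i
    · exact hy j
  · exact halg
  · exact fun x y _ _ => hadd x y
  · exact fun x y _ _ => hmul x y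

theorem hom_ext {f g : T →ₐ[K] T}
    (h1 : ∀ i, f (genEv K (Fin (p+1)) (Fin (q+1)) i) = g (genEv K (Fin (p+1)) (Fin (q+1)) i))
    (h2 : ∀ j, f (genOd K (Fin (p+1)) (Fin (q+1)) j) = g (genOd K (Fin (p+1)) (Fin (q+1)) j)) :
    f = g := by
  apply AlgHom.ext; intro x
  refine gen_induction (M := fun v => f v = g v) ?_ h1 h2 ?_ ?_ x
  · intro r; rw [AlgHom.commutes, AlgHom.commutes]
  · intro a b ha hb; rw [map_add, map_add, ha, hb]
  · intro a b ha hb; rw [map_mul, map_mul, ha, hb]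

theorem comm_left (c : A) (x : T) : Commute (c ⊗ₜ[K] (1:E)) x := by
  induction x using TensorProduct.induction_on with
  | zero => exact Commute.zero_right _
  | tmul P e =>
    show _ = _
    rw [Algebra.TensorProduct.tmul_mul_tmul, Algebra.TensorProduct.tmul_mul_tmul,
      one_mul, mul_one, mul_comm]
  | add x y h1 h2 => exact Commute.add_right h1 h2

theorem ι_anticomm (u v : Fin (q+1) →₀ K) :
    ExteriorAlgebra.ι K u * ExteriorAlgebra.ι K v
      + ExteriorAlgebra.ι K v * ExteriorAlgebra.ι K u = (0 : E) := by
  have h := ExteriorAlgebra.ι_sq_zero (R := K) (u + v)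
  simp only [map_add, add_mul, mul_add, ExteriorAlgebra.ι_sq_zero, zero_add, add_zero] at h
  rw [add_comm (ExteriorAlgebra.ι K v * ExteriorAlgebra.ι K u)] at h
  exact h

/-- the odd part linear map -/
noncomputable def oddMap (cc : Fin (q+1) → A) : (Fin (q+1) →₀ K) →ₗ[K] T :=
  (Algebra.TensorProduct.includeRight :
      ExteriorAlgebra K (Fin (q+1) →₀ K) →ₐ[K] T).toLinearMap.comp (ExteriorAlgebra.ι K)
  + ((TensorProduct.mk K (MvPolynomial (Fin (p+1)) K) (ExteriorAlgebra K (Fin (q+1) →₀ K))).flip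
      (ExteriorAlgebra.ι K (Finsupp.single 0 1))).comp (Finsupp.linearCombination K cc)

theorem oddMap_apply (cc : Fin (q+1) → A) (m : Fin (q+1) →₀ K) :
    oddMap cc m = (1:A) ⊗ₜ[K] ExteriorAlgebra.ι K m
      + (Finsupp.linearCombination K cc m) ⊗ₜ[K] ExteriorAlgebra.ι K (Finsupp.single 0 1) := rfl

theorem oddMap_sq (cc : Fin (q+1) → A) (m : Fin (q+1) →₀ K) :
    oddMap cc m * oddMap cc m = 0 := by
  rw [oddMap_apply]
  set b := Finsupp.linearCombination K cc m with hb
  set u := ExteriorAlgebra.ι K m with hu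
  set v := ExteriorAlgebra.ι K (Finsupp.single (0 : Fin (q+1)) (1:K)) with hv
  rw [mul_add, add_mul, add_mul, Algebra.TensorProduct.tmul_mul_tmul,
    Algebra.TensorProduct.tmul_mul_tmul, Algebra.TensorProduct.tmul_mul_tmul,
    Algebra.TensorProduct.tmul_mul_tmul, one_mul, one_mul, mul_one]
  rw [hu, ExteriorAlgebra.ι_sq_zero, ← hu, TensorProduct.tmul_zero, zero_add]
  rw [hv, ExteriorAlgebra.ι_sq_zero, ← hv, TensorProduct.tmul_zero, add_zero]
  rw [← TensorProduct.tmul_add, ι_anticomm, TensorProduct.tmul_zero]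

/-- the hom builder -/
noncomputable def mk (φ : A →ₐ[K] A) (cc : Fin (q+1) → A) : T →ₐ[K] T :=
  Algebra.TensorProduct.lift (Algebra.TensorProduct.includeLeft.comp φ)
    (ExteriorAlgebra.lift K ⟨oddMap cc, oddMap_sq cc⟩)
    (fun x y => show Commute _ _ from comm_left (φ x) _)

theorem mk_tmul_one (φ : A →ₐ[K] A) (cc : Fin (q+1) → A) (P : A) :
    mk φ cc (P ⊗ₜ[K] (1:E)) = (φ P) ⊗ₜ[K] (1:E) := by
  rw [mk, Algebra.TensorProduct.lift_tmul, map_one, mul_one]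
  rfl

theorem mk_genEv (φ : A →ₐ[K] A) (cc : Fin (q+1) → A) (i : Fin (p+1)) :
    mk φ cc (genEv K (Fin (p+1)) (Fin (q+1)) i) = (φ (X i)) ⊗ₜ[K] (1:E) :=
  mk_tmul_one φ cc (X i)

theorem mk_genOd (φ : A →ₐ[K] A) (cc : Fin (q+1) → A) (j : Fin (q+1)) :
    mk φ cc (genOd K (Fin (p+1)) (Fin (q+1)) j) =
      genOd K (Fin (p+1)) (Fin (q+1)) j
        + (cc j) ⊗ₜ[K] ExteriorAlgebra.ι K (Finsupp.single 0 1) := by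
  have hg : genOd K (Fin (p+1)) (Fin (q+1)) j
      = (1:A) ⊗ₜ[K] ExteriorAlgebra.ι K (Finsupp.single j 1) := rfl
  rw [hg, mk, Algebra.TensorProduct.lift_tmul, map_one, one_mul,
    ExteriorAlgebra.lift_ι_apply, oddMap_apply, Finsupp.linearCombination_single, one_smul]

theorem d_one (σ : T →ₐ[K] T) (d : T →ₗ[K] T)
    (hdleib : ∀ a b, d (a * b) = d a * b + σ a * d b) : d 1 = 0 := by
  have h := hdleib 1 1
  rw [mul_one, mul_one, show (σ 1 : T) = 1 from map_one σ, one_mul] at h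
  exact (left_eq_add.mp h)

theorem d_tmul_one (σ : T →ₐ[K] T) (d : T →ₗ[K] T)
    (hdleib : ∀ a b, d (a * b) = d a * b + σ a * d b)
    (hdx : ∀ i, d (genEv K (Fin (p+1)) (Fin (q+1)) i) = 0) (P : A) :
    d (P ⊗ₜ[K] (1:E)) = 0 := by
  induction P using MvPolynomial.induction_on with
  | C r =>
    have h := (Algebra.TensorProduct.includeLeft :
        MvPolynomial (Fin (p+1)) K →ₐ[K] T).commutes r
    rw [Algebra.TensorProduct.includeLeft_apply, MvPolynomial.algebraMap_eq] at h
    rw [h, Algebra.algebraMap_eq_smul_one, map_smul, d_one σ d hdleib, smul_zero]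
  | add Q1 Q2 h1 h2 => rw [TensorProduct.add_tmul, map_add, h1, h2, add_zero]
  | mul_X Q i h =>
    have : (Q * X i) ⊗ₜ[K] (1 : E) = (Q ⊗ₜ[K] (1 : E)) * genEv K _ _ i := by
      rw [genEv, Algebra.TensorProduct.tmul_mul_tmul, mul_one]
    rw [this, hdleib, h, hdx, zero_mul, zero_add, mul_zero]

theorem sigma_tmul (σ : T →ₐ[K] T)
    (hσx : ∀ i, σ (genEv K (Fin (p+1)) (Fin (q+1)) i) = genEv K (Fin (p+1)) (Fin (q+1)) i)
    (P : A) : σ (P ⊗ₜ[K] (1:E)) = P ⊗ₜ[K] (1:E) := by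
  have h : σ.comp (Algebra.TensorProduct.includeLeft :
      MvPolynomial (Fin (p+1)) K →ₐ[K] T) = Algebra.TensorProduct.includeLeft := by
    apply MvPolynomial.algHom_ext
    intro i
    simpa [genEv] using hσx i
  have := AlgHom.congr_fun h P
  simpa using this

theorem genEv_def (i : Fin (p+1)) : genEv K (Fin (p+1)) (Fin (q+1)) i
    = (X i : A) ⊗ₜ[K] (1:E) := rfl

theorem genOd_def (j : Fin (q+1)) : genOd K (Fin (p+1)) (Fin (q+1)) j
    = (1:A) ⊗ₜ[K] ExteriorAlgebra.ι K (Finsupp.single j 1) := rfl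

theorem tmul_iota (c : A) :
    c ⊗ₜ[K] ExteriorAlgebra.ι K (Finsupp.single (0 : Fin (q+1)) (1:K))
      = (c ⊗ₜ[K] (1:E)) * genOd K (Fin (p+1)) (Fin (q+1)) 0 := by
  rw [genOd_def, Algebra.TensorProduct.tmul_mul_tmul, mul_one, one_mul]

theorem mk_tmul_iota (φ : A →ₐ[K] A) (cc : Fin (q+1) → A) (h0 : cc 0 = 0) (c : A) :
    mk φ cc (c ⊗ₜ[K] ExteriorAlgebra.ι K (Finsupp.single (0 : Fin (q+1)) (1:K)))
      = (φ c) ⊗ₜ[K] ExteriorAlgebra.ι K (Finsupp.single (0 : Fin (q+1)) (1:K)) := by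
  rw [tmul_iota, map_mul, mk_tmul_one, mk_genOd, h0, TensorProduct.zero_tmul, add_zero,
    ← tmul_iota]

theorem mk_comp_mk (φ1 φ2 : A →ₐ[K] A) (cc1 cc2 : Fin (q+1) → A) (h10 : cc1 0 = 0) :
    (mk φ1 cc1).comp (mk φ2 cc2) = mk (φ1.comp φ2) (fun j => cc1 j + φ1 (cc2 j)) := by
  apply hom_ext
  · intro i
    rw [AlgHom.comp_apply, mk_genEv, mk_tmul_one, mk_genEv, AlgHom.comp_apply]
  · intro j
    rw [AlgHom.comp_apply, mk_genOd, map_add, mk_genOd, mk_tmul_iota φ1 cc1 h10, mk_genOd,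
      add_assoc, ← TensorProduct.add_tmul]

theorem mk_id : mk (AlgHom.id K A) (fun _ => 0) = AlgHom.id K T := by
  apply hom_ext
  · intro i
    rw [mk_genEv, AlgHom.id_apply, AlgHom.id_apply]
    rfl
  · intro j
    rw [mk_genOd, TensorProduct.zero_tmul, add_zero, AlgHom.id_apply]

end Stmt11Aux

open MvPolynomial Stmt11Aux

set_option maxHeartbeats 1000000 in
set_option synthInstance.maxHeartbeats 200000 in
/-- Let `(ΛV, d)` be a pure Sullivan algebra on even
generators `x₀,…,x_p` and odd generators `y₀,…,y_q`, with `d x_i = 0` and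
`d y_j = P_j(x₀,…,x_p)`, such that `d y₀ = x₀ − a` with `a ∈ Λ(x₁,…,x_p)`.
Let `η : Λ(x₀,…,x_p) → Λ(x₁,…,x_p)` substitute `a` for `x₀`, and let the
"target" differential `d'` on `Λ(x₁,…,x_p,y₁,…,y_q) ⊗ Λ(x₀,y₀)` be given by
`d' x_i = 0`, `d' y_j = η(d y_j)` (`j ≥ 1`) and `d' y₀ = x₀`.  Then there is an
isomorphism of dga's `(ΛV, d) ≅ (ΛW, d̄) ⊗ (Λ(x₀,y₀), d̄)`.  (We realize the
target tensor product on the same free graded-commutative algebra, indexing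
`x₀ = genEv 0`, `y₀ = genOd 0`; derivations are encoded via the Leibniz rule
twisted by the parity involution `σ`.) -/
theorem stmt_11 (K : Type) [Field K] [CharZero K] (p q : ℕ)
    (σ : FreeGC K (Fin (p + 1)) (Fin (q + 1)) →ₐ[K] FreeGC K (Fin (p + 1)) (Fin (q + 1)))
    (hσx : ∀ i, σ (genEv K (Fin (p + 1)) (Fin (q + 1)) i) = genEv K (Fin (p + 1)) (Fin (q + 1)) i)
    (hσy : ∀ j, σ (genOd K (Fin (p + 1)) (Fin (q + 1)) j) = - genOd K (Fin (p + 1)) (Fin (q + 1)) j)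
    (hσσ : ∀ a, σ (σ a) = a)
    (d dT : FreeGC K (Fin (p + 1)) (Fin (q + 1)) →ₗ[K] FreeGC K (Fin (p + 1)) (Fin (q + 1)))
    (hdleib : ∀ a b, d (a * b) = d a * b + σ a * d b)
    (hdTleib : ∀ a b, dT (a * b) = dT a * b + σ a * dT b)
    (hd2 : ∀ a, d (d a) = 0)
    -- purity of `d`: `d x_i = 0` and `d y_j` is a polynomial in the `x`'s
    (P : Fin (q + 1) → MvPolynomial (Fin (p + 1)) K)
    (hdx : ∀ i, d (genEv K (Fin (p + 1)) (Fin (q + 1)) i) = 0)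
    (hdy : ∀ j, d (genOd K (Fin (p + 1)) (Fin (q + 1)) j) =
      (P j) ⊗ₜ[K] (1 : ExteriorAlgebra K (Fin (q + 1) →₀ K)))
    -- `d y₀ = x₀ − a` with `a ∈ Λ(x₁,…,x_p)`
    (a : MvPolynomial (Fin p) K)
    (hP0 : P 0 = MvPolynomial.X 0 - MvPolynomial.rename Fin.succ a)
    -- the target differential
    (hdTx : ∀ i, dT (genEv K (Fin (p + 1)) (Fin (q + 1)) i) = 0)
    (hdTy0 : dT (genOd K (Fin (p + 1)) (Fin (q + 1)) 0) = genEv K (Fin (p + 1)) (Fin (q + 1)) 0)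
    (hdTy : ∀ j : Fin q,
      dT (genOd K (Fin (p + 1)) (Fin (q + 1)) j.succ) =
        (MvPolynomial.rename Fin.succ
          (MvPolynomial.aeval
            (Fin.cases a (fun i : Fin p => MvPolynomial.X i)) (P j.succ))) ⊗ₜ[K]
          (1 : ExteriorAlgebra K (Fin (q + 1) →₀ K))) :
    ∃ e : FreeGC K (Fin (p + 1)) (Fin (q + 1)) ≃ₐ[K] FreeGC K (Fin (p + 1)) (Fin (q + 1)),
      ∀ v, e (d v) = dT (e v) := by
  classical
  set aR : MvPolynomial (Fin (p+1)) K := rename Fin.succ a with haR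
  set φ : MvPolynomial (Fin (p+1)) K →ₐ[K] MvPolynomial (Fin (p+1)) K :=
    aeval (Fin.cases (X 0 + aR) fun i : Fin p => X i.succ) with hφdef
  set ψ : MvPolynomial (Fin (p+1)) K →ₐ[K] MvPolynomial (Fin (p+1)) K :=
    aeval (Fin.cases (X 0 - aR) fun i : Fin p => X i.succ) with hψdef
  have hren : ∀ (u : MvPolynomial (Fin (p+1)) K) (t : MvPolynomial (Fin p) K),
      aeval (Fin.cases u fun i : Fin p => X i.succ) (rename Fin.succ t)
        = rename Fin.succ t := by
    intro u t
    rw [aeval_rename]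
    have h1 : (Fin.cases u fun i : Fin p =>
          (X i.succ : MvPolynomial (Fin (p+1)) K)) ∘ Fin.succ
        = fun i : Fin p => X i.succ := by
      funext i; simp
    rw [h1]
    have h2 : (aeval fun i : Fin p => (X i.succ : MvPolynomial (Fin (p+1)) K))
        = ((rename Fin.succ :
            MvPolynomial (Fin p) K →ₐ[K] MvPolynomial (Fin (p+1)) K)) := by
      apply MvPolynomial.algHom_ext; intro i; simp
    rw [h2]
  have hφren : ∀ t : MvPolynomial (Fin p) K,
      φ (rename Fin.succ t) = rename Fin.succ t := by
    intro t; rw [hφdef]; exact hren _ t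
  have hψren : ∀ t : MvPolynomial (Fin p) K,
      ψ (rename Fin.succ t) = rename Fin.succ t := by
    intro t; rw [hψdef]; exact hren _ t
  have hφX0 : φ (X 0 - aR) = X 0 := by
    rw [map_sub, haR, hφren, hφdef, aeval_X, Fin.cases_zero, ← haR]
    ring
  have hφψ : φ.comp ψ = AlgHom.id K (MvPolynomial (Fin (p+1)) K) := by
    apply MvPolynomial.algHom_ext
    intro i
    induction i using Fin.cases with
    | zero =>
      rw [AlgHom.comp_apply, hψdef, aeval_X, Fin.cases_zero, hφX0, AlgHom.id_apply]
    | succ i =>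
      rw [AlgHom.comp_apply, hψdef, aeval_X, Fin.cases_succ, hφdef, aeval_X,
        Fin.cases_succ, AlgHom.id_apply]
  have hψφ : ψ.comp φ = AlgHom.id K (MvPolynomial (Fin (p+1)) K) := by
    apply MvPolynomial.algHom_ext
    intro i
    induction i using Fin.cases with
    | zero =>
      rw [AlgHom.comp_apply, hφdef, aeval_X, Fin.cases_zero, map_add, haR, hψren,
        hψdef, aeval_X, Fin.cases_zero, ← haR, AlgHom.id_apply]
      ring
    | succ i =>
      rw [AlgHom.comp_apply, hφdef, aeval_X, Fin.cases_succ, hψdef, aeval_X,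
        Fin.cases_succ, AlgHom.id_apply]
  choose cdiv hcdiv using fun j : Fin q => Stmt11Aux.div_lemma a (P j.succ)
  set cc : Fin (q+1) → MvPolynomial (Fin (p+1)) K :=
    Fin.cases 0 (fun j => φ (cdiv j)) with hccdef
  set cc' : Fin (q+1) → MvPolynomial (Fin (p+1)) K :=
    Fin.cases 0 (fun j => - ψ (φ (cdiv j))) with hcc'def
  have hcc0 : cc 0 = 0 := by rw [hccdef]; simp
  have hcc'0 : cc' 0 = 0 := by rw [hcc'def]; simp
  have hccs : ∀ j : Fin q, cc j.succ = φ (cdiv j) := by intro j; rw [hccdef]; simp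
  have hcc's : ∀ j : Fin q, cc' j.succ = - ψ (φ (cdiv j)) := by intro j; rw [hcc'def]; simp
  set F := Stmt11Aux.mk φ cc with hFdef
  set G := Stmt11Aux.mk ψ cc' with hGdef
  have hFG : F.comp G = AlgHom.id K (FreeGC K (Fin (p+1)) (Fin (q+1))) := by
    rw [hFdef, hGdef, Stmt11Aux.mk_comp_mk φ ψ cc cc' hcc0, hφψ]
    have h3 : (fun j => cc j + φ (cc' j))
        = (fun _ : Fin (q+1) => (0 : MvPolynomial (Fin (p+1)) K)) := by
      funext j
      induction j using Fin.cases with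
      | zero => rw [hcc0, hcc'0, map_zero, add_zero]
      | succ j =>
        rw [hccs, hcc's, map_neg,
          show φ (ψ (φ (cdiv j))) = φ (cdiv j) from AlgHom.congr_fun hφψ _]
        exact add_neg_cancel _
    rw [h3, Stmt11Aux.mk_id]
  have hGF : G.comp F = AlgHom.id K (FreeGC K (Fin (p+1)) (Fin (q+1))) := by
    rw [hFdef, hGdef, Stmt11Aux.mk_comp_mk ψ φ cc' cc hcc'0, hψφ]
    have h3 : (fun j => cc' j + ψ (cc j))
        = (fun _ : Fin (q+1) => (0 : MvPolynomial (Fin (p+1)) K)) := by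
      funext j
      induction j using Fin.cases with
      | zero => rw [hcc0, hcc'0, map_zero, add_zero]
      | succ j =>
        rw [hccs, hcc's]
        exact neg_add_cancel _
    rw [h3, Stmt11Aux.mk_id]
  have hσtm := Stmt11Aux.sigma_tmul σ hσx
  have hσF : ∀ v, σ (F v) = F (σ v) := by
    have hcomp : σ.comp F = F.comp σ := by
      apply Stmt11Aux.hom_ext
      · intro i
        rw [AlgHom.comp_apply, AlgHom.comp_apply, hσx, hFdef, Stmt11Aux.mk_genEv, hσtm]
      · intro j
        rw [AlgHom.comp_apply, AlgHom.comp_apply, hσy j, map_neg, hFdef,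
          Stmt11Aux.mk_genOd, map_add, hσy j, Stmt11Aux.tmul_iota, map_mul, hσtm, hσy 0]
        have hmn : (cc j ⊗ₜ[K] (1 : ExteriorAlgebra K (Fin (q+1) →₀ K)))
              * -(genOd K (Fin (p+1)) (Fin (q+1)) 0)
            = -((cc j ⊗ₜ[K] (1 : ExteriorAlgebra K (Fin (q+1) →₀ K)))
              * genOd K (Fin (p+1)) (Fin (q+1)) 0) :=
          mul_neg (cc j ⊗ₜ[K] (1 : ExteriorAlgebra K (Fin (q+1) →₀ K)))
            (genOd K (Fin (p+1)) (Fin (q+1)) 0)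
        rw [hmn, neg_add]
    intro w; exact AlgHom.congr_fun hcomp w
  have hd1 : d 1 = 0 := Stmt11Aux.d_one σ d hdleib
  have hdT1 : dT 1 = 0 := Stmt11Aux.d_one σ dT hdTleib
  have hdT0 : ∀ Q : MvPolynomial (Fin (p+1)) K,
      dT (Q ⊗ₜ[K] (1 : ExteriorAlgebra K (Fin (q+1) →₀ K))) = 0 :=
    Stmt11Aux.d_tmul_one σ dT hdTleib hdTx
  have main : ∀ v, F (d v) = dT (F v) := by
    intro v
    refine Stmt11Aux.gen_induction (M := fun v => F (d v) = dT (F v)) ?_ ?_ ?_ ?_ ?_ v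
    · intro r
      rw [Algebra.algebraMap_eq_smul_one, map_smul, hd1, smul_zero, map_zero, map_smul,
        map_one, map_smul, hdT1, smul_zero]
    · intro i
      rw [hdx i, map_zero, hFdef, Stmt11Aux.mk_genEv, hdT0]
    · intro j
      induction j using Fin.cases with
      | zero =>
        rw [hdy 0, hP0, hFdef, Stmt11Aux.mk_tmul_one, hφX0, Stmt11Aux.mk_genOd, hcc0,
          TensorProduct.zero_tmul, add_zero, hdTy0, Stmt11Aux.genEv_def]
      | succ j =>
        rw [hdy, hFdef, Stmt11Aux.mk_tmul_one, Stmt11Aux.mk_genOd, map_add, hdTy j, hccs,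
          Stmt11Aux.tmul_iota, hdTleib, hdT0, zero_mul, zero_add, hσtm, hdTy0,
          Stmt11Aux.genEv_def, Algebra.TensorProduct.tmul_mul_tmul, mul_one,
          ← TensorProduct.add_tmul]
        congr 1
        have h := congrArg φ (hcdiv j)
        rw [← haR] at h
        rw [map_sub, map_mul, hφX0, hφren] at h
        linear_combination h
    · intro x y hx hy
      simp only [map_add]
      rw [hx, hy]
    · intro x y hx hy
      calc F (d (x*y)) = F (d x) * F y + F (σ x) * F (d y) := by
            rw [hdleib, map_add, map_mul F, map_mul F]
        _ = dT (F x) * F y + σ (F x) * dT (F y) := by rw [hx, hy, ← hσF]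
        _ = dT (F x * F y) := (hdTleib _ _).symm
        _ = dT (F (x*y)) := congrArg dT (map_mul F x y).symm
  exact ⟨AlgEquiv.ofAlgHom F G hFG hGF, fun v => main v⟩
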